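/- arXiv:0904.4131 — 2 statements merged into one kernel-verified Lean document; each statement's English description precedes it below -/
import Mathlib

section
/- Coercivity and existence of a minimizer for Version 2: under the standing assumptions on f and ρ̄, and assuming additionally that x² · inf{f(y) : y between ā(x)x and x} → ∞ as |x| → ∞, the cost functional C⁽²⁾ : ℝ^{N+1} → ℝ satisfies C⁽²⁾(x) → ∞ as ‖x‖_∞ → ∞; consequently C⁽²⁾ attains a global minimum on the affine hyperplane Ξ = {x ∈ ℝ^{N+1} : ∑ₙ xₙ = X₀}. -/
open Real Filter Finset

/-- `Fi f x = F(x) = ∫₀ˣ f(y) dy`. -/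
noncomputable def Fi (f : ℝ → ℝ) (x : ℝ) : ℝ := ∫ y in (0:ℝ)..x, f y

/-- `Ft f x = F̃(x) = ∫₀ˣ y f(y) dy`. -/
noncomputable def Ft (f : ℝ → ℝ) (x : ℝ) : ℝ := ∫ y in (0:ℝ)..x, y * f y

/-- `Gf f Finv = G = F̃ ∘ F⁻¹`. -/
noncomputable def Gf (f Finv : ℝ → ℝ) (x : ℝ) : ℝ := Ft f (Finv x)

/-- `ab τ ρ x = ā(x) = exp(−τ ρ̄(x))`. -/
noncomputable def ab (τ : ℝ) (ρ : ℝ → ℝ) (x : ℝ) : ℝ := Real.exp (-(τ * ρ x))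

/-- Version 2 dynamics: `D₀ = 0`, `Dₙ⁺ = F⁻¹(F(Dₙ) + xₙ)`, `D_{n+1} = ā(Dₙ⁺)·Dₙ⁺`. -/
noncomputable def Dv (f Finv : ℝ → ℝ) (τ : ℝ) (ρ : ℝ → ℝ) (x : ℕ → ℝ) : ℕ → ℝ
  | 0 => 0
  | n + 1 =>
      ab τ ρ (Finv (Fi f (Dv f Finv τ ρ x n) + x n)) * Finv (Fi f (Dv f Finv τ ρ x n) + x n)

/-- Version 2 cost functional `C⁽²⁾`. -/
noncomputable def C2 (f Finv : ℝ → ℝ) (τ : ℝ) (ρ : ℝ → ℝ) (N : ℕ) (x : ℕ → ℝ) : ℝ :=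
  ∑ n ∈ Finset.range (N + 1),
    (Gf f Finv (x n + Fi f (Dv f Finv τ ρ x n)) - Ft f (Dv f Finv τ ρ x n))


lemma fi_sub {f : ℝ → ℝ} (hf : Continuous f) (a b : ℝ) :
    Fi f b - Fi f a = ∫ y in a..b, f y := by
  have h := intervalIntegral.integral_add_adjacent_intervals
    (hf.intervalIntegrable (μ := MeasureTheory.volume) 0 a) (hf.intervalIntegrable a b)
  simp only [Fi]; linarith

lemma ft_sub {f : ℝ → ℝ} (hf : Continuous f) (a b : ℝ) :
    Ft f b - Ft f a = ∫ y in a..b, y * f y := by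
  have h := intervalIntegral.integral_add_adjacent_intervals
    ((continuous_id.mul hf).intervalIntegrable (μ := MeasureTheory.volume) 0 a)
    ((continuous_id.mul hf).intervalIntegrable a b)
  simp only [Pi.mul_apply, id_eq] at h; simp only [Ft]; linarith

lemma intt_nonpos {g : ℝ → ℝ} {a b : ℝ} (hab : a ≤ b)
    (h : ∀ y ∈ Set.Icc a b, g y ≤ 0) : (∫ y in a..b, g y) ≤ 0 := by
  have : 0 ≤ ∫ y in a..b, -(g y) :=
    intervalIntegral.integral_nonneg hab fun y hy => neg_nonneg.mpr (h y hy)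
  rw [intervalIntegral.integral_neg] at this
  linarith

lemma ft_zero (f : ℝ → ℝ) : Ft f 0 = 0 := intervalIntegral.integral_same

lemma ft_nonneg {f : ℝ → ℝ} (hf : Continuous f) (hfpos : ∀ x, 0 < f x) (x : ℝ) :
    0 ≤ Ft f x := by
  have h := ft_sub hf x 0
  rw [ft_zero] at h
  rcases le_or_gt 0 x with hx | hx
  · exact intervalIntegral.integral_nonneg hx fun y hy => mul_nonneg hy.1 (hfpos y).le
  · have := intt_nonpos hx.le (fun y hy => mul_nonpos_of_nonpos_of_nonneg hy.2 (hfpos y).le)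
    linarith

lemma ft_scale_le {f : ℝ → ℝ} (hf : Continuous f) (hfpos : ∀ x, 0 < f x)
    {a : ℝ} (ha0 : 0 ≤ a) (ha1 : a ≤ 1) (x : ℝ) : Ft f (a * x) ≤ Ft f x := by
  rcases le_or_gt 0 x with hx | hx
  · have h1 : a * x ≤ x := by nlinarith
    have := ft_sub hf (a * x) x
    have hpos : 0 ≤ ∫ y in (a*x)..x, y * f y :=
      intervalIntegral.integral_nonneg h1 fun y hy =>
        mul_nonneg (le_trans (mul_nonneg ha0 hx) hy.1) (hfpos y).le
    linarith
  · have h1 : x ≤ a * x := by nlinarith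
    have h2 : a * x ≤ 0 := by nlinarith
    have := ft_sub hf x (a * x)
    have hneg := intt_nonpos h1 (fun y hy =>
      mul_nonpos_of_nonpos_of_nonneg (le_trans hy.2 h2) (hfpos y).le)
    linarith

lemma sInf_img_nonneg {f : ℝ → ℝ} (hfpos : ∀ x, 0 < f x) (s : Set ℝ) (hs : s.Nonempty) :
    0 ≤ sInf (f '' s) :=
  le_csInf (hs.image f) (by rintro b ⟨y, -, rfl⟩; exact (hfpos y).le)

lemma sInf_img_le {f : ℝ → ℝ} (hf : Continuous f) {a b y : ℝ} (hy : y ∈ Set.uIcc a b) :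
    sInf (f '' Set.uIcc a b) ≤ f y :=
  csInf_le (isCompact_uIcc.image hf).bddBelow (Set.mem_image_of_mem f hy)

lemma ft_diff_ge {f : ℝ → ℝ} (hf : Continuous f) (hfpos : ∀ x, 0 < f x)
    {a : ℝ} (ha0 : 0 < a) (ha1 : a ≤ 1) (x : ℝ) :
    (1 - a ^ 2) / 2 * (x ^ 2 * sInf (f '' Set.uIcc (a * x) x)) ≤ Ft f x - Ft f (a * x) := by
  set m := sInf (f '' Set.uIcc (a * x) x) with hm
  have hm0 : 0 ≤ m := sInf_img_nonneg hfpos _ Set.nonempty_uIcc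
  have hintm : ∀ u v : ℝ, (∫ y in u..v, m * y) = m * ((v ^ 2 - u ^ 2) / 2) := by
    intro u v
    rw [intervalIntegral.integral_const_mul, integral_id]
  rcases le_or_gt 0 x with hx | hx
  · have h1 : a * x ≤ x := by nlinarith
    have huIcc : Set.uIcc (a * x) x = Set.Icc (a * x) x := Set.uIcc_of_le h1
    have hmono : (∫ y in (a*x)..x, m * y) ≤ ∫ y in (a*x)..x, y * f y := by
      apply intervalIntegral.integral_mono_on h1
        ((continuous_const.mul continuous_id).intervalIntegrable _ _)
        ((continuous_id.mul hf).intervalIntegrable _ _)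
      intro y hy
      have hy0 : 0 ≤ y := le_trans (mul_nonneg ha0.le hx) hy.1
      have := sInf_img_le hf (huIcc ▸ hy)
      rw [← hm] at this
      show m * y ≤ y * f y
      nlinarith
    have := ft_sub hf (a * x) x
    rw [hintm] at hmono
    nlinarith
  · have h1 : x ≤ a * x := by nlinarith
    have h2 : a * x ≤ 0 := by nlinarith
    have huIcc : Set.uIcc (a * x) x = Set.Icc x (a * x) := Set.uIcc_of_ge h1
    have hmono : (∫ y in x..(a*x), y * f y) ≤ ∫ y in x..(a*x), m * y := by
      apply intervalIntegral.integral_mono_on h1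
        ((continuous_id.mul hf).intervalIntegrable _ _)
        ((continuous_const.mul continuous_id).intervalIntegrable _ _)
      intro y hy
      have hy0 : y ≤ 0 := le_trans hy.2 h2
      have := sInf_img_le hf (huIcc ▸ hy)
      rw [← hm] at this
      show y * f y ≤ m * y
      nlinarith
    have := ft_sub hf x (a * x)
    rw [hintm] at hmono
    nlinarith

noncomputable def Dp (f Finv : ℝ → ℝ) (τ : ℝ) (ρ : ℝ → ℝ) (x : ℕ → ℝ) (n : ℕ) : ℝ :=
  Finv (Fi f (Dv f Finv τ ρ x n) + x n)

lemma dv_succ (f Finv : ℝ → ℝ) (τ : ℝ) (ρ : ℝ → ℝ) (x : ℕ → ℝ) (n : ℕ) :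
    Dv f Finv τ ρ x (n + 1) = ab τ ρ (Dp f Finv τ ρ x n) * Dp f Finv τ ρ x n := rfl

lemma C2_eq {f : ℝ → ℝ} (Finv : ℝ → ℝ) (τ : ℝ) (ρ : ℝ → ℝ) (N : ℕ) (x : ℕ → ℝ) :
    C2 f Finv τ ρ N x =
      (∑ n ∈ Finset.range (N + 1),
        (Ft f (Dp f Finv τ ρ x n) - Ft f (Dv f Finv τ ρ x (n + 1))))
      + Ft f (Dv f Finv τ ρ x (N + 1)) := by
  have htel := Finset.sum_range_sub (fun n => Ft f (Dv f Finv τ ρ x n)) (N + 1)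
  have h0 : Dv f Finv τ ρ x 0 = 0 := rfl
  rw [h0, ft_zero, sub_zero] at htel
  calc C2 f Finv τ ρ N x
      = ∑ n ∈ Finset.range (N + 1),
          ((Ft f (Dp f Finv τ ρ x n) - Ft f (Dv f Finv τ ρ x (n + 1)))
            + (Ft f (Dv f Finv τ ρ x (n + 1)) - Ft f (Dv f Finv τ ρ x n))) := by
        apply Finset.sum_congr rfl
        intro n _
        simp only [Gf, Dp, add_comm (x n)]
        ring
    _ = _ := by
        rw [Finset.sum_add_distrib, htel]

lemma dv_congr (f Finv : ℝ → ℝ) (τ : ℝ) (ρ : ℝ → ℝ) (x x' : ℕ → ℝ) :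
    ∀ n : ℕ, (∀ m < n, x m = x' m) → Dv f Finv τ ρ x n = Dv f Finv τ ρ x' n
  | 0, _ => rfl
  | n + 1, h => by
      have ih := dv_congr f Finv τ ρ x x' n (fun m hm => h m (hm.trans (Nat.lt_succ_self n)))
      show ab τ ρ (Finv (Fi f (Dv f Finv τ ρ x n) + x n)) * Finv (Fi f (Dv f Finv τ ρ x n) + x n)
        = _
      rw [ih, h n (Nat.lt_succ_self n)]
      rfl

lemma C2_congr (f Finv : ℝ → ℝ) (τ : ℝ) (ρ : ℝ → ℝ) (N : ℕ) (x x' : ℕ → ℝ)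
    (h : ∀ m ≤ N, x m = x' m) : C2 f Finv τ ρ N x = C2 f Finv τ ρ N x' := by
  unfold C2
  apply Finset.sum_congr rfl
  intro n hn
  rw [Finset.mem_range] at hn
  have hn' : n ≤ N := Nat.lt_succ_iff.mp hn
  rw [dv_congr f Finv τ ρ x x' n (fun m hm => h m (le_of_lt (lt_of_lt_of_le hm hn'))),
    h n hn']

lemma fi_continuous {f : ℝ → ℝ} (hf : Continuous f) : Continuous (Fi f) :=
  intervalIntegral.continuous_primitive
    (fun a b => hf.intervalIntegrable a b) 0

lemma ft_continuous {f : ℝ → ℝ} (hf : Continuous f) : Continuous (Ft f) :=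
  intervalIntegral.continuous_primitive
    (fun a b => (continuous_id.mul hf).intervalIntegrable a b) 0

lemma fi_strictMono {f : ℝ → ℝ} (hf : Continuous f) (hfpos : ∀ x, 0 < f x) :
    StrictMono (Fi f) := by
  intro a b hab
  have h := fi_sub hf a b
  have hpos : 0 < ∫ y in a..b, f y :=
    intervalIntegral.intervalIntegral_pos_of_pos_on (hf.intervalIntegrable a b)
      (fun y _ => hfpos y) hab
  linarith

lemma finv_continuous {f Finv : ℝ → ℝ} (hf : Continuous f) (hfpos : ∀ x, 0 < f x)
    (hFinv₁ : ∀ x, Fi f (Finv x) = x) : Continuous Finv := by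
  have hmono := fi_strictMono hf hfpos
  have hsurj : Function.Surjective (Fi f) := fun y => ⟨Finv y, hFinv₁ y⟩
  let e := StrictMono.orderIsoOfSurjective (Fi f) hmono hsurj
  have he : Continuous (e.symm : ℝ → ℝ) := e.symm.toHomeomorph.continuous
  have heq : (fun y => (e.symm y : ℝ)) = Finv := by
    funext y
    apply hmono.injective
    have : Fi f (e.symm y) = y := by
      have h2 := e.apply_symm_apply y
      rw [show (e (e.symm y)) = Fi f (e.symm y) from rfl] at h2
      exact h2
    rw [this, hFinv₁]
  rw [← heq]; exact he

lemma dv_continuous {f Finv : ℝ → ℝ} (hf : Continuous (Fi f)) (hFinv : Continuous Finv)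
    (τ : ℝ) {ρ : ℝ → ℝ} (hρ : Continuous ρ) :
    ∀ n : ℕ, Continuous (fun x : ℕ → ℝ => Dv f Finv τ ρ x n)
  | 0 => continuous_const
  | n + 1 => by
      have ih := dv_continuous hf hFinv τ hρ n
      have h1 : Continuous (fun x : ℕ → ℝ => Finv (Fi f (Dv f Finv τ ρ x n) + x n)) :=
        hFinv.comp ((hf.comp ih).add (continuous_apply n))
      exact ((Real.continuous_exp.comp ((continuous_const.mul (hρ.comp h1)).neg)).mul h1)

lemma c2_continuous {f Finv : ℝ → ℝ} (hf : Continuous f) (hFinv : Continuous Finv)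
    (τ : ℝ) {ρ : ℝ → ℝ} (hρ : Continuous ρ) (N : ℕ) :
    Continuous (C2 f Finv τ ρ N) := by
  unfold C2
  apply continuous_finset_sum
  intro n _
  apply Continuous.sub
  · exact (ft_continuous hf).comp (hFinv.comp
      (((continuous_apply n).add ((fi_continuous hf).comp
        (dv_continuous (fi_continuous hf) hFinv τ hρ n)))))
  · exact (ft_continuous hf).comp (dv_continuous (fi_continuous hf) hFinv τ hρ n)

/-- Coercivity of `C⁽²⁾` (`C⁽²⁾(x) → ∞` as `‖x‖_∞ → ∞`) and existence of a global
minimizer on `Ξ = {x : ∑ₙ xₙ = X₀}`. -/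
theorem C2_coercive_and_min_exists
    (f Finv : ℝ → ℝ) (hf : Continuous f) (hfpos : ∀ x, 0 < f x)
    (htop : Tendsto (Fi f) atTop atTop) (hbot : Tendsto (Fi f) atBot atBot)
    (hFinv₁ : ∀ x, Fi f (Finv x) = x) (hFinv₂ : ∀ x, Finv (Fi f x) = x)
    (τ : ℝ) (hτ : 0 < τ) (ρ : ℝ → ℝ) (hρ : ContDiff ℝ 1 ρ)
    (k K : ℝ) (hk : 0 < k) (hkK : k < K) (hρbd : ∀ x, k ≤ ρ x ∧ ρ x ≤ K)
    (hfinf₁ : Tendsto (fun x : ℝ => x ^ 2 * sInf (f '' Set.uIcc (ab τ ρ x * x) x)) atTop atTop)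
    (hfinf₂ : Tendsto (fun x : ℝ => x ^ 2 * sInf (f '' Set.uIcc (ab τ ρ x * x) x)) atBot atTop)
    (N : ℕ) (hN : 1 ≤ N) (X₀ : ℝ) (hX₀ : 0 < X₀) :
    (∀ M : ℝ, ∃ R : ℝ, ∀ x : ℕ → ℝ, (∃ n ≤ N, R ≤ |x n|) → M ≤ C2 f Finv τ ρ N x) ∧
    (∃ ξ : ℕ → ℝ, (∑ n ∈ Finset.range (N + 1), ξ n = X₀) ∧
      ∀ y : ℕ → ℝ, (∑ n ∈ Finset.range (N + 1), y n = X₀) →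
        C2 f Finv τ ρ N ξ ≤ C2 f Finv τ ρ N y) := by
  -- basic facts about ab
  have hab_pos : ∀ z, 0 < ab τ ρ z := fun z => Real.exp_pos _
  have hab_le : ∀ z, ab τ ρ z ≤ Real.exp (-(τ * k)) := by
    intro z
    apply Real.exp_le_exp.mpr
    have := (hρbd z).1
    nlinarith
  have hexp_lt : Real.exp (-(τ * k)) < 1 := by
    rw [Real.exp_lt_one_iff]
    nlinarith
  have hab_le_one : ∀ z, ab τ ρ z ≤ 1 := fun z => (hab_le z).trans hexp_lt.le
  set c : ℝ := (1 - Real.exp (-(τ * k)) ^ 2) / 2 with hc_def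
  have hc : 0 < c := by
    have h0 := Real.exp_pos (-(τ * k))
    nlinarith
  -- lower bound for the "gain" function
  set g : ℝ → ℝ := fun z => Ft f z - Ft f (ab τ ρ z * z) with hg_def
  have hg_ge : ∀ z, c * (z ^ 2 * sInf (f '' Set.uIcc (ab τ ρ z * z) z)) ≤ g z := by
    intro z
    have h1 := ft_diff_ge hf hfpos (hab_pos z) (hab_le_one z) z
    have hm0 : 0 ≤ sInf (f '' Set.uIcc (ab τ ρ z * z) z) :=
      sInf_img_nonneg hfpos _ Set.nonempty_uIcc
    have hcle : c ≤ (1 - ab τ ρ z ^ 2) / 2 := by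
      have h2 := hab_le z
      have h3 := hab_pos z
      nlinarith
    calc c * (z ^ 2 * sInf (f '' Set.uIcc (ab τ ρ z * z) z))
        ≤ (1 - ab τ ρ z ^ 2) / 2 * (z ^ 2 * sInf (f '' Set.uIcc (ab τ ρ z * z) z)) :=
          mul_le_mul_of_nonneg_right hcle (by positivity)
      _ ≤ g z := h1
  have hg0 : ∀ z, 0 ≤ g z := by
    intro z
    have := ft_scale_le hf hfpos (hab_pos z).le (hab_le_one z) z
    simp only [hg_def]
    linarith
  -- C2 dominates each gain
  have hkey : ∀ (x : ℕ → ℝ) (n : ℕ), n ≤ N → g (Dp f Finv τ ρ x n) ≤ C2 f Finv τ ρ N x := by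
    intro x n hn
    rw [C2_eq Finv τ ρ N x]
    have hterm : ∀ m ∈ Finset.range (N + 1),
        0 ≤ Ft f (Dp f Finv τ ρ x m) - Ft f (Dv f Finv τ ρ x (m + 1)) := by
      intro m _
      rw [dv_succ]
      exact hg0 _
    have hmem : n ∈ Finset.range (N + 1) := Finset.mem_range.mpr (Nat.lt_succ_of_le hn)
    have hsingle := Finset.single_le_sum hterm hmem
    rw [dv_succ] at hsingle
    have hFt := ft_nonneg hf hfpos (Dv f Finv τ ρ x (N + 1))
    have : g (Dp f Finv τ ρ x n)
        = Ft f (Dp f Finv τ ρ x n) - Ft f (ab τ ρ (Dp f Finv τ ρ x n) * Dp f Finv τ ρ x n) := rfl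
    linarith
  -- coercivity
  have hcoer : ∀ M : ℝ, ∃ R : ℝ, ∀ x : ℕ → ℝ,
      (∃ n ≤ N, R ≤ |x n|) → M ≤ C2 f Finv τ ρ N x := by
    intro M
    obtain ⟨r₁, h₁⟩ := (hfinf₁.eventually (eventually_ge_atTop (M / c))).exists_forall_of_atTop
    obtain ⟨r₂, h₂⟩ := eventually_atBot.mp (hfinf₂.eventually (eventually_ge_atTop (M / c)))
    set r : ℝ := max (max r₁ (-r₂)) 0 with hr_def
    have hr0 : 0 ≤ r := le_max_right _ _
    have hgM : ∀ z, r ≤ |z| → M ≤ g z := by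
      intro z hz
      have hMc : M / c ≤ z ^ 2 * sInf (f '' Set.uIcc (ab τ ρ z * z) z) := by
        rcases le_or_gt 0 z with h | h
        · have : r₁ ≤ z := by
            rw [abs_of_nonneg h] at hz
            exact le_trans (le_trans (le_max_left _ _) (le_max_left _ _)) hz
          exact h₁ z this
        · have : z ≤ r₂ := by
            rw [abs_of_neg h] at hz
            have : -r₂ ≤ r := le_trans (le_max_right _ _) (le_max_left _ _)
            linarith
          exact h₂ z this
      exact ((div_le_iff₀' hc).mp hMc).trans (hg_ge z)
    obtain ⟨B, hB⟩ := (isCompact_Icc (a := -r) (b := r)).exists_bound_of_continuousOn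
      (fi_continuous hf).continuousOn
    refine ⟨2 * B + 1, ?_⟩
    rintro x ⟨n, hnN, hR⟩
    by_contra hlt
    push_neg at hlt
    have hDp : ∀ m, m ≤ N → |Dp f Finv τ ρ x m| < r := by
      intro m hm
      by_contra hge
      push_neg at hge
      exact absurd (le_trans (hgM _ hge) (hkey x m hm)) (not_le.mpr hlt)
    have hDv : ∀ m, m ≤ N → |Dv f Finv τ ρ x m| ≤ r := by
      intro m hm
      cases m with
      | zero =>
          rw [show Dv f Finv τ ρ x 0 = 0 from rfl]
          simpa using hr0
      | succ p =>
          rw [dv_succ, abs_mul, abs_of_pos (hab_pos _)]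
          have h1 : |Dp f Finv τ ρ x p| < r := hDp p (le_trans (Nat.le_succ p) hm)
          nlinarith [hab_pos (Dp f Finv τ ρ x p), hab_le_one (Dp f Finv τ ρ x p),
            abs_nonneg (Dp f Finv τ ρ x p)]
    have hxn : x n = Fi f (Dp f Finv τ ρ x n) - Fi f (Dv f Finv τ ρ x n) := by
      simp only [Dp, hFinv₁]
      ring
    have hB1 : |Fi f (Dp f Finv τ ρ x n)| ≤ B := by
      have := hB (Dp f Finv τ ρ x n) (abs_le.mp (hDp n hnN).le)
      rwa [Real.norm_eq_abs] at this
    have hB2 : |Fi f (Dv f Finv τ ρ x n)| ≤ B := by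
      have := hB (Dv f Finv τ ρ x n) (abs_le.mp (hDv n hnN))
      rwa [Real.norm_eq_abs] at this
    have : |x n| ≤ 2 * B := by
      rw [hxn]
      calc |Fi f (Dp f Finv τ ρ x n) - Fi f (Dv f Finv τ ρ x n)|
          ≤ |Fi f (Dp f Finv τ ρ x n)| + |Fi f (Dv f Finv τ ρ x n)| := abs_sub _ _
        _ ≤ 2 * B := by linarith
    linarith
  refine ⟨hcoer, ?_⟩
  -- existence of a minimizer on the hyperplane
  have hFinvc : Continuous Finv := finv_continuous hf hfpos hFinv₁
  have hC2c : Continuous (C2 f Finv τ ρ N) := c2_continuous hf hFinvc τ hρ.continuous N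
  have hNne : ((N : ℝ) + 1) ≠ 0 := by positivity
  set ξ₀ : ℕ → ℝ := fun n => if n ≤ N then X₀ / (N + 1) else 0 with hξ₀_def
  have hξ₀sum : ∑ n ∈ Finset.range (N + 1), ξ₀ n = X₀ := by
    have hcongr : ∑ n ∈ Finset.range (N + 1), ξ₀ n
        = ∑ _n ∈ Finset.range (N + 1), X₀ / ((N : ℝ) + 1) :=
      Finset.sum_congr rfl fun n hn => by
        show (if n ≤ N then X₀ / ((N : ℝ) + 1) else 0) = X₀ / ((N : ℝ) + 1)
        rw [if_pos (Nat.lt_succ_iff.mp (Finset.mem_range.mp hn))]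
    rw [hcongr, Finset.sum_const, Finset.card_range, nsmul_eq_mul]
    push_cast
    field_simp
  obtain ⟨R, hRcoer⟩ := hcoer (C2 f Finv τ ρ N ξ₀ + 1)
  set R' : ℝ := max R (|X₀ / (N + 1)| + 1) with hR'_def
  set S : Set (ℕ → ℝ) :=
    (Set.univ.pi fun n => if n ≤ N then Set.Icc (-R') R' else ({0} : Set ℝ)) ∩
      {x | ∑ n ∈ Finset.range (N + 1), x n = X₀} with hS_def
  have hsumc : Continuous fun x : ℕ → ℝ => ∑ n ∈ Finset.range (N + 1), x n :=
    continuous_finset_sum _ fun n _ => continuous_apply n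
  have hScompact : IsCompact S := by
    apply IsCompact.inter_right
    · apply isCompact_univ_pi
      intro n
      by_cases hn : n ≤ N
      · simp only [if_pos hn]; exact isCompact_Icc
      · simp only [if_neg hn]; exact isCompact_singleton
    · exact isClosed_singleton.preimage hsumc
  have hξ₀mem : ξ₀ ∈ S := by
    constructor
    · intro n _
      show (if n ≤ N then X₀ / ((N:ℝ) + 1) else 0) ∈ (if n ≤ N then Set.Icc (-R') R' else ({0} : Set ℝ))
      by_cases hn : n ≤ N
      · rw [if_pos hn, if_pos hn]
        constructor
        · have := abs_nonneg (X₀ / ((N : ℝ) + 1))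
          have h1 : |X₀ / ((N : ℝ) + 1)| + 1 ≤ R' := le_max_right _ _
          have h2 := neg_abs_le (X₀ / ((N : ℝ) + 1))
          push_cast
          linarith
        · have h1 : |X₀ / ((N : ℝ) + 1)| + 1 ≤ R' := le_max_right _ _
          have h2 := le_abs_self (X₀ / ((N : ℝ) + 1))
          push_cast
          linarith
      · rw [if_neg hn, if_neg hn]; rfl
    · exact hξ₀sum
  obtain ⟨ξ, hξS, hξmin⟩ := hScompact.exists_isMinOn ⟨ξ₀, hξ₀mem⟩ hC2c.continuousOn
  refine ⟨ξ, hξS.2, ?_⟩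
  intro y hy
  by_cases hcase : ∃ n ≤ N, R ≤ |y n|
  · have h1 : C2 f Finv τ ρ N ξ₀ + 1 ≤ C2 f Finv τ ρ N y := hRcoer y hcase
    have h2 : C2 f Finv τ ρ N ξ ≤ C2 f Finv τ ρ N ξ₀ := hξmin hξ₀mem
    linarith
  · push_neg at hcase
    set y' : ℕ → ℝ := fun n => if n ≤ N then y n else 0 with hy'_def
    have hy'S : y' ∈ S := by
      constructor
      · intro n _
        show (if n ≤ N then y n else 0) ∈ (if n ≤ N then Set.Icc (-R') R' else ({0} : Set ℝ))
        by_cases hn : n ≤ N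
        · rw [if_pos hn, if_pos hn]
          have h1 : |y n| < R := hcase n hn
          have h2 : R ≤ R' := le_max_left _ _
          exact abs_le.mp (le_of_lt (lt_of_lt_of_le h1 h2))
        · rw [if_neg hn, if_neg hn]; rfl
      · show (∑ n ∈ Finset.range (N + 1), y' n) = X₀
        have hcongr : ∑ n ∈ Finset.range (N + 1), y' n = ∑ n ∈ Finset.range (N + 1), y n :=
          Finset.sum_congr rfl fun n hn => by
            show (if n ≤ N then y n else 0) = y n
            rw [if_pos (Nat.lt_succ_iff.mp (Finset.mem_range.mp hn))]
        rw [hcongr]; exact hy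
    have heq : C2 f Finv τ ρ N y' = C2 f Finv τ ρ N y :=
      C2_congr f Finv τ ρ N y' y (fun m hm => by
        show (if m ≤ N then y m else 0) = y m
        rw [if_pos hm])
    calc C2 f Finv τ ρ N ξ ≤ C2 f Finv τ ρ N y' := hξmin hy'S
      _ = C2 f Finv τ ρ N y := heq
end

section
/- Uniqueness and positivity of the first-order candidate for Version 2 (Lemma on ĥ₂): under the hypotheses of the Version 2 theorem (1 − τρ̄′(x)x > 0 for all x, h₂ one-to-one), the functions x ↦ h₂(F⁻¹(x)) and ĥ₂(x) := −F⁻¹(X₀ − N[x − F(ā(F⁻¹(x))·F⁻¹(x))]) are both strictly increasing on ℝ. Consequently the equation F⁻¹(X₀ − N[ξ₀ − F(ā(F⁻¹(ξ₀))·F⁻¹(ξ₀))]) = h₂(F⁻¹(ξ₀)) has at most one solution ξ₀, and any solution is strictly positive. -/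
open Real Filter

/-- The function `h₂` of the generalized AFS model, Version 2. -/
noncomputable def h2 (f : ℝ → ℝ) (τ : ℝ) (ρ : ℝ → ℝ) (x : ℝ) : ℝ :=
  x * ((f x - (ab τ ρ x) ^ 2 * f (ab τ ρ x * x) * (1 - τ * deriv ρ x * x)) /
    (f x - ab τ ρ x * f (ab τ ρ x * x) * (1 - τ * deriv ρ x * x)))

/-- The denominator appearing in `h2`. -/
noncomputable def den2 (f : ℝ → ℝ) (τ : ℝ) (ρ : ℝ → ℝ) (x : ℝ) : ℝ :=
  f x - ab τ ρ x * f (ab τ ρ x * x) * (1 - τ * deriv ρ x * x)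

/-- The numerator appearing in `h2`. -/
noncomputable def num2 (f : ℝ → ℝ) (τ : ℝ) (ρ : ℝ → ℝ) (x : ℝ) : ℝ :=
  f x - (ab τ ρ x) ^ 2 * f (ab τ ρ x * x) * (1 - τ * deriv ρ x * x)

lemma h2_eq (f : ℝ → ℝ) (τ : ℝ) (ρ : ℝ → ℝ) (x : ℝ) :
    h2 f τ ρ x = x * (num2 f τ ρ x / den2 f τ ρ x) := rfl

lemma ab_pos (τ : ℝ) (ρ : ℝ → ℝ) (x : ℝ) : 0 < ab τ ρ x := Real.exp_pos _

lemma ab_lt_one {τ : ℝ} (hτ : 0 < τ) {ρ : ℝ → ℝ} (hρpos : ∀ x, 0 < ρ x) (x : ℝ) :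
    ab τ ρ x < 1 := by
  rw [ab, Real.exp_lt_one_iff]
  nlinarith [hρpos x]

/-- Uniqueness and positivity of the first-order candidate for Version 2:
`x ↦ h₂(F⁻¹(x))` and `ĥ₂(x) = −F⁻¹(X₀ − N[x − F(ā(F⁻¹(x))F⁻¹(x))])` are strictly
increasing; hence the stationarity equation has at most one solution, which is positive. -/
theorem h2hat_strictMono_unique_positive_solution
    (f Finv : ℝ → ℝ) (hf : Continuous f) (hfpos : ∀ x, 0 < f x)
    (htop : Tendsto (Fi f) atTop atTop) (hbot : Tendsto (Fi f) atBot atBot)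
    (hFinv₁ : ∀ x, Fi f (Finv x) = x) (hFinv₂ : ∀ x, Finv (Fi f x) = x)
    (τ : ℝ) (hτ : 0 < τ) (ρ : ℝ → ℝ) (hρ : ContDiff ℝ 1 ρ) (hρpos : ∀ x, 0 < ρ x)
    (hρ' : ∀ x, 0 < 1 - τ * deriv ρ x * x)
    (N : ℕ) (hN : 1 ≤ N) (X₀ : ℝ) (hX₀ : 0 < X₀)
    (hh2 : Function.Injective (h2 f τ ρ)) :
    StrictMono (fun x : ℝ => h2 f τ ρ (Finv x)) ∧
    StrictMono (fun x : ℝ =>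
      -Finv (X₀ - (N : ℝ) * (x - Fi f (ab τ ρ (Finv x) * Finv x)))) ∧
    (∀ a b : ℝ,
      Finv (X₀ - (N : ℝ) * (a - Fi f (ab τ ρ (Finv a) * Finv a))) = h2 f τ ρ (Finv a) →
      Finv (X₀ - (N : ℝ) * (b - Fi f (ab τ ρ (Finv b) * Finv b))) = h2 f τ ρ (Finv b) →
      a = b) ∧
    (∀ a : ℝ,
      Finv (X₀ - (N : ℝ) * (a - Fi f (ab τ ρ (Finv a) * Finv a))) = h2 f τ ρ (Finv a) →
      0 < a) := by
  -- basic continuity facts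
  have hcρ : Continuous ρ := hρ.continuous
  have hcρ' : Continuous (deriv ρ) := hρ.continuous_deriv le_rfl
  have hcab : Continuous (ab τ ρ) := ((continuous_const.mul hcρ).neg).rexp
  have hcden : Continuous (den2 f τ ρ) := by
    unfold den2
    exact hf.sub (((hcab.mul (hf.comp (hcab.mul continuous_id))).mul
      (continuous_const.sub ((continuous_const.mul hcρ').mul continuous_id))))
  -- h2 at 0
  have h2zero : h2 f τ ρ 0 = 0 := by simp [h2]
  -- denominator is positive at 0
  have hden0 : 0 < den2 f τ ρ 0 := by
    have h1 : den2 f τ ρ 0 = f 0 * (1 - ab τ ρ 0) := by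
      simp [den2, mul_zero]; ring
    rw [h1]
    have := ab_lt_one hτ hρpos 0
    nlinarith [hfpos 0]
  -- denominator nonzero away from 0 (by injectivity of h2)
  have hden_ne : ∀ x : ℝ, x ≠ 0 → den2 f τ ρ x ≠ 0 := by
    intro x hx hd
    apply hx
    apply hh2
    rw [h2zero, h2_eq, hd, div_zero, mul_zero]
  -- denominator positive everywhere (IVT)
  have hden_pos : ∀ x : ℝ, 0 < den2 f τ ρ x := by
    intro x
    rcases eq_or_ne x 0 with rfl | hx
    · exact hden0
    rcases lt_trichotomy (den2 f τ ρ x) 0 with hneg | h0 | hpos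
    · exfalso
      have hmem : (0:ℝ) ∈ Set.uIcc (den2 f τ ρ 0) (den2 f τ ρ x) :=
        Set.mem_uIcc.2 (Or.inr ⟨hneg.le, hden0.le⟩)
      obtain ⟨c, _, hc0⟩ := intermediate_value_uIcc (hcden.continuousOn) hmem
      rcases eq_or_ne c 0 with rfl | hc
      · exact hden0.ne' hc0
      · exact hden_ne c hc hc0
    · exact absurd h0 (hden_ne x hx)
    · exact hpos
  -- numerator exceeds denominator
  have hnum_gt : ∀ x : ℝ, den2 f τ ρ x < num2 f τ ρ x := by
    intro x
    have h1 : num2 f τ ρ x - den2 f τ ρ x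
        = ab τ ρ x * (1 - ab τ ρ x) * (f (ab τ ρ x * x) * (1 - τ * deriv ρ x * x)) := by
      unfold num2 den2; ring
    have h2p : 0 < ab τ ρ x * (1 - ab τ ρ x) * (f (ab τ ρ x * x) * (1 - τ * deriv ρ x * x)) :=
      mul_pos (mul_pos (ab_pos τ ρ x) (by linarith [ab_lt_one hτ hρpos x]))
        (mul_pos (hfpos _) (hρ' x))
    linarith
  have hratio_pos : ∀ x : ℝ, 0 < num2 f τ ρ x / den2 f τ ρ x := fun x =>
    div_pos ((hden_pos x).trans (hnum_gt x)) (hden_pos x)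
  -- h2 is continuous
  have hch2 : Continuous (h2 f τ ρ) := by
    have hcnum : Continuous (num2 f τ ρ) := by
      unfold num2
      exact hf.sub ((((hcab.pow 2).mul (hf.comp (hcab.mul continuous_id))).mul
        (continuous_const.sub ((continuous_const.mul hcρ').mul continuous_id))))
    have : Continuous (fun x => x * (num2 f τ ρ x / den2 f τ ρ x)) :=
      continuous_id.mul (hcnum.div hcden fun x => (hden_pos x).ne')
    exact this
  -- sign of h2
  have h2sign_pos : ∀ x : ℝ, 0 < x → 0 < h2 f τ ρ x := fun x hx => by
    rw [h2_eq]; exact mul_pos hx (hratio_pos x)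
  have h2sign_nonpos : ∀ x : ℝ, x ≤ 0 → h2 f τ ρ x ≤ 0 := fun x hx => by
    rw [h2_eq]; exact mul_nonpos_of_nonpos_of_nonneg hx (hratio_pos x).le
  -- h2 strictly monotone
  have h2mono : StrictMono (h2 f τ ρ) := by
    rcases hch2.strictMono_of_inj hh2 with hm | ha
    · exact hm
    · exfalso
      have := ha (show (0:ℝ) < 1 by norm_num)
      rw [h2zero] at this
      exact absurd (h2sign_pos 1 one_pos) (not_lt.2 this.le)
  -- Fi is strictly monotone
  have hFi_mono : StrictMono (Fi f) := by
    intro a b hab'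
    have hsub : Fi f b - Fi f a = ∫ y in a..b, f y :=
      intervalIntegral.integral_interval_sub_left (hf.intervalIntegrable 0 b)
        (hf.intervalIntegrable 0 a)
    have hpos : 0 < ∫ y in a..b, f y :=
      intervalIntegral.intervalIntegral_pos_of_pos (hf.intervalIntegrable a b) hfpos hab'
    linarith
  have hFi0 : Fi f 0 = 0 := intervalIntegral.integral_same
  have hFinv0 : Finv 0 = 0 := by
    have h := hFinv₂ 0
    rwa [hFi0] at h
  have hFinv_mono : StrictMono Finv := by
    intro a b hab'
    have : Fi f (Finv a) < Fi f (Finv b) := by rw [hFinv₁, hFinv₁]; exact hab'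
    exact hFi_mono.lt_iff_lt.mp this
  -- derivative facts
  have hFder : ∀ x : ℝ, HasDerivAt (Fi f) (f x) x := fun x =>
    intervalIntegral.integral_hasDerivAt_right (hf.intervalIntegrable 0 x)
      (hf.stronglyMeasurableAtFilter _ _) hf.continuousAt
  have hρd : ∀ x : ℝ, HasDerivAt ρ (deriv ρ x) x := fun x =>
    (hρ.differentiable one_ne_zero x).hasDerivAt
  have habd : ∀ x : ℝ, HasDerivAt (fun u => ab τ ρ u * u)
      (ab τ ρ x * (1 - τ * deriv ρ x * x)) x := by
    intro x
    have h1 : HasDerivAt (fun u => -(τ * ρ u)) (-(τ * deriv ρ x)) x :=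
      (((hρd x).const_mul τ)).neg
    have h2' : HasDerivAt (fun u => ab τ ρ u)
        (Real.exp (-(τ * ρ x)) * -(τ * deriv ρ x)) x := h1.exp
    have h3 := h2'.mul (hasDerivAt_id x)
    convert h3 using 1
    all_goals try rfl
    unfold ab
    simp only [id_eq]
    ring
  -- g(u) = F(u) - F(ā(u)u) is strictly monotone
  set g : ℝ → ℝ := fun u => Fi f u - Fi f (ab τ ρ u * u) with hg
  have hgder : ∀ u : ℝ, HasDerivAt g (den2 f τ ρ u) u := by
    intro u
    have h4 : HasDerivAt (Fi f ∘ fun v => ab τ ρ v * v)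
        (f (ab τ ρ u * u) * (ab τ ρ u * (1 - τ * deriv ρ u * u))) u :=
      HasDerivAt.comp (h₂ := Fi f) (h := fun v => ab τ ρ v * v) u (hFder _) (habd u)
    simp only [Function.comp_def] at h4
    have h5 := (hFder u).sub h4
    convert h5 using 1
    all_goals try rfl
    unfold den2
    ring
  have hg_mono : StrictMono g :=
    strictMono_of_deriv_pos (fun u => by rw [(hgder u).deriv]; exact hden_pos u)
  -- the three main pieces
  have part1 : StrictMono (fun x : ℝ => h2 f τ ρ (Finv x)) := h2mono.comp hFinv_mono
  have hNpos : (0:ℝ) < (N:ℝ) := by exact_mod_cast Nat.lt_of_lt_of_le Nat.zero_lt_one hN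
  have hinner : ∀ x : ℝ, x - Fi f (ab τ ρ (Finv x) * Finv x) = g (Finv x) := by
    intro x
    rw [hg]
    simp only [hFinv₁]
  have part2 : StrictMono (fun x : ℝ =>
      -Finv (X₀ - (N : ℝ) * (x - Fi f (ab τ ρ (Finv x) * Finv x)))) := by
    intro x y hxy
    simp only [hinner, neg_lt_neg_iff]
    apply hFinv_mono
    have : g (Finv x) < g (Finv y) := hg_mono (hFinv_mono hxy)
    nlinarith
  refine ⟨part1, part2, ?_, ?_⟩
  · -- uniqueness
    intro a b ha hb
    have hφ : StrictMono (fun x : ℝ => h2 f τ ρ (Finv x) +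
        -Finv (X₀ - (N : ℝ) * (x - Fi f (ab τ ρ (Finv x) * Finv x)))) :=
      part1.add part2
    apply hφ.injective
    simp only [← ha, ← hb, add_neg_cancel]
  · -- positivity
    intro a ha
    by_contra hle
    push_neg at hle
    set u := Finv a with hu
    have hu0 : u ≤ 0 := by
      have h1 : Fi f u ≤ Fi f 0 := by rw [hu, hFinv₁, hFi0]; exact hle
      exact hFi_mono.le_iff_le.mp h1
    have habu : u ≤ ab τ ρ u * u := by
      nlinarith [ab_pos τ ρ u, ab_lt_one hτ hρpos u]
    have hFle : Fi f u ≤ Fi f (ab τ ρ u * u) := hFi_mono.monotone habu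
    have haeq : a = Fi f u := (hFinv₁ a).symm
    have hargpos : 0 < X₀ - (N : ℝ) * (a - Fi f (ab τ ρ u * u)) := by
      have h1 : a - Fi f (ab τ ρ u * u) ≤ 0 := by rw [haeq]; linarith
      nlinarith
    have hFinvpos : 0 < Finv (X₀ - (N : ℝ) * (a - Fi f (ab τ ρ u * u))) := by
      rw [← hFinv0]
      exact hFinv_mono hargpos
    rw [ha] at hFinvpos
    exact absurd hFinvpos (not_lt.2 (h2sign_nonpos u hu0))
end
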